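/- Let V ∈ ℝ³, let f, g : ℝ³ → ℝ be affine maps with f(V) ≠ 0 and g(V) ≠ 0, and let λ ∈ ℝ with λ ≠ 1. Define the affine map h := (1/(1−λ))·(f/f(V)) − (λ/(1−λ))·(g/g(V)), so that h(V) = 1 and h is an affine combination of f and g (hence its zero set is a plane of the pencil spanned by the zero sets of f and g, not passing through V). Then for every direction u ∈ ℝ³ and all t_a, t_b ∈ ℝ \ {0} with f(V + t_a·u) = 0, g(V + t_b·u) = 0 and t_b − λ·t_a ≠ 0, the point C := V + t_c·u with t_c := t_a·t_b·(1−λ)/(t_b − λ·t_a) satisfies h(C) = 0. In particular, all points obtained on the rulings through V by fixing the cross-ratio (A,B;C,V) = λ of the intersection points A, B with the planes {f = 0}, {g = 0} lie in one common plane of the pencil spanned by these two planes. -/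
import Mathlib

lemma affine_eval (f : (Fin 3 → ℝ) →ᵃ[ℝ] ℝ) (V u : Fin 3 → ℝ) (t : ℝ) :
    f (V + t • u) = f V + t * f.linear u := by
  have : V + t • u = (t • u) +ᵥ V := by simp [add_comm]
  rw [this, AffineMap.map_vadd, map_smul]
  simp [add_comm, smul_eq_mul]

theorem crossratio_curve_is_planar
    (V : Fin 3 → ℝ) (f g : (Fin 3 → ℝ) →ᵃ[ℝ] ℝ)
    (hf : f V ≠ 0) (hg : g V ≠ 0) (lam : ℝ) (hlam : lam ≠ 1) :
    (1 / (1 - lam)) * (f V / f V) - (lam / (1 - lam)) * (g V / g V) = 1 ∧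
    ∀ (u : Fin 3 → ℝ) (ta tb : ℝ), ta ≠ 0 → tb ≠ 0 →
      f (V + ta • u) = 0 → g (V + tb • u) = 0 → tb - lam * ta ≠ 0 →
      (1 / (1 - lam)) * (f (V + (ta * tb * (1 - lam) / (tb - lam * ta)) • u) / f V) -
        (lam / (1 - lam)) * (g (V + (ta * tb * (1 - lam) / (tb - lam * ta)) • u) / g V)
        = 0 := by
  have h1 : (1 : ℝ) - lam ≠ 0 := sub_ne_zero.mpr (Ne.symm hlam)
  constructor
  · field_simp
  · intro u ta tb hta htb hfa hgb hden
    rw [affine_eval] at hfa hgb ⊢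
    rw [affine_eval]
    have ha : f.linear u = -f V / ta := by field_simp; linarith
    have hb : g.linear u = -g V / tb := by field_simp; linarith
    rw [ha, hb]
    field_simp
    ring
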